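/- Let E₁⁺, E₁⁻, E₂⁺, E₂⁻ be finite-dimensional complex inner product spaces and let a : E₁⁺ → E₁⁻ and b : E₂⁺ → E₂⁻ be linear maps. Define the linear map M : (E₁⁺⊗E₂⁺) ⊕ (E₁⁻⊗E₂⁻) → (E₁⁻⊗E₂⁺) ⊕ (E₁⁺⊗E₂⁻) by the block matrix M = [[a⊗1, −1⊗b*],[1⊗b, a*⊗1]]. Then M*M = (a*a)⊗1 + 1⊗(b*b) on E₁⁺⊗E₂⁺ plus the analogous positive operator on E₁⁻⊗E₂⁻, and M is invertible if and only if a is invertible or b is invertible. -/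

import Mathlib

set_option linter.unusedSectionVars false
set_option maxHeartbeats 1000000

open scoped TensorProduct
open LinearMap Function

section Helpers

variable {V V' W W' : Type*}
  [NormedAddCommGroup V] [InnerProductSpace ℂ V] [FiniteDimensional ℂ V]
  [NormedAddCommGroup V'] [InnerProductSpace ℂ V'] [FiniteDimensional ℂ V']
  [NormedAddCommGroup W] [InnerProductSpace ℂ W] [FiniteDimensional ℂ W]
  [NormedAddCommGroup W'] [InnerProductSpace ℂ W'] [FiniteDimensional ℂ W']

local notation "⟪" x ", " y "⟫" => inner (𝕜 := ℂ) x y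

lemma eps_adj_inj_of_surj (a : V →ₗ[ℂ] V') (h : Surjective a) : Injective (adjoint a) := by
  rw [← LinearMap.ker_eq_bot, Submodule.eq_bot_iff]
  intro x hx
  have : ∀ y, ⟪x, a y⟫ = 0 := by
    intro y
    rw [← LinearMap.adjoint_inner_left]
    simp [LinearMap.mem_ker.mp hx]
  obtain ⟨y, hy⟩ := h x
  have := this y
  rw [hy] at this
  simpa using this

lemma eps_surj_of_adj_inj (a : V →ₗ[ℂ] V') (h : Injective (adjoint a)) : Surjective a := by
  rw [← LinearMap.range_eq_top, ← Submodule.orthogonal_eq_bot_iff, Submodule.eq_bot_iff]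
  intro x hx
  have hax : adjoint a x = 0 := by
    have := hx (a (adjoint a x)) ⟨adjoint a x, rfl⟩
    rw [← LinearMap.adjoint_inner_right] at this
    simpa [inner_self_eq_zero] using this
  have : adjoint a x = adjoint a 0 := by simpa using hax
  simpa using h this

lemma eps_exists_ker (a : V →ₗ[ℂ] V') (h : ¬ Injective a) : ∃ v, v ≠ 0 ∧ a v = 0 := by
  rw [← LinearMap.ker_eq_bot, ← ne_eq] at h
  obtain ⟨v, hv, h0⟩ := (Submodule.ne_bot_iff _).mp h
  exact ⟨v, h0, LinearMap.mem_ker.mp hv⟩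

/-- The functional `x ⊗ y ↦ ⟪v,x⟫⟪w,y⟫`. -/
noncomputable def epsPhi (v : V) (w : W) : (V ⊗[ℂ] W) →ₗ[ℂ] ℂ :=
  (TensorProduct.lid ℂ ℂ).toLinearMap ∘ₗ
    TensorProduct.map ((innerSL ℂ v).toLinearMap) ((innerSL ℂ w).toLinearMap)

@[simp] lemma epsPhi_tmul (v x : V) (w y : W) :
    epsPhi v w (x ⊗ₜ[ℂ] y) = ⟪v, x⟫ * ⟪w, y⟫ := by
  simp [epsPhi, TensorProduct.lid_tmul, smul_eq_mul]

lemma epsPhi_self_ne_zero {v : V} {w : W} (hv : v ≠ 0) (hw : w ≠ 0) :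
    epsPhi v w (v ⊗ₜ[ℂ] w) ≠ 0 := by
  simp only [epsPhi_tmul]
  exact mul_ne_zero (by simpa [inner_self_eq_zero] using hv)
    (by simpa [inner_self_eq_zero] using hw)

lemma eps_tmul_ne_zero {v : V} {w : W} (hv : v ≠ 0) (hw : w ≠ 0) :
    v ⊗ₜ[ℂ] w ≠ (0 : V ⊗[ℂ] W) := by
  intro h
  exact epsPhi_self_ne_zero hv hw (by rw [h, map_zero])

lemma epsPhi_comp_left (c : V' →ₗ[ℂ] V) {v : V} (w : W) (hv : adjoint c v = 0) :
    (epsPhi v w) ∘ₗ TensorProduct.map c (LinearMap.id : W →ₗ[ℂ] W) = 0 := by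
  apply TensorProduct.ext'
  intro x y
  simp [← LinearMap.adjoint_inner_left c, hv]

lemma epsPhi_comp_right (d : W' →ₗ[ℂ] W) (v : V) {w : W} (hw : adjoint d w = 0) :
    (epsPhi v w) ∘ₗ TensorProduct.map (LinearMap.id : V →ₗ[ℂ] V) d = 0 := by
  apply TensorProduct.ext'
  intro x y
  simp [← LinearMap.adjoint_inner_left d, hw]

lemma eps_tensor_inj (S : V →ₗ[ℂ] V) (T : W →ₗ[ℂ] W) (hT : T.IsSymmetric)
    (h : ∀ μ : ℝ, (∃ x : W, x ≠ 0 ∧ T x = (μ : ℂ) • x) →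
      Injective (S + (μ : ℂ) • (LinearMap.id : V →ₗ[ℂ] V))) :
    Injective (TensorProduct.map S (LinearMap.id : W →ₗ[ℂ] W)
      + TensorProduct.map (LinearMap.id : V →ₗ[ℂ] V) T) := by
  rw [← LinearMap.ker_eq_bot, Submodule.eq_bot_iff]
  intro z hz
  rw [LinearMap.mem_ker] at hz
  set n := Module.finrank ℂ W with hn
  let w : OrthonormalBasis (Fin n) ℂ W := hT.eigenvectorBasis rfl
  let μ : Fin n → ℝ := hT.eigenvalues rfl
  have hww : ∀ j, T (w j) = (μ j : ℂ) • w j := fun j => hT.apply_eigenvectorBasis rfl j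
  -- the coordinate maps
  let C : Fin n → (V ⊗[ℂ] W →ₗ[ℂ] V) := fun j =>
    (TensorProduct.rid ℂ V).toLinearMap ∘ₗ
      TensorProduct.map (LinearMap.id) (w.toBasis.coord j)
  have hC_tmul : ∀ (j) (x : V) (y : W), C j (x ⊗ₜ[ℂ] y) = (w.repr y j) • x := by
    intro j x y
    simp [C, TensorProduct.rid_tmul, Module.Basis.coord_apply]
  have hCS : ∀ j, (C j) ∘ₗ TensorProduct.map S (LinearMap.id : W →ₗ[ℂ] W) = S ∘ₗ C j := by
    intro j
    apply TensorProduct.ext'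
    intro x y
    simp [hC_tmul]
  have hCT : ∀ j, (C j) ∘ₗ TensorProduct.map (LinearMap.id : V →ₗ[ℂ] V) T
      = (μ j : ℂ) • C j := by
    intro j
    apply TensorProduct.ext'
    intro x y
    simp only [LinearMap.comp_apply, TensorProduct.map_tmul, LinearMap.id_apply, hC_tmul,
      LinearMap.smul_apply]
    rw [smul_smul]
    congr 1
    rw [w.repr_apply_apply, w.repr_apply_apply, ← hT (w j) y, hww j,
      inner_smul_left]
    simp
  -- each coordinate of z vanishes
  have hCz : ∀ j, C j z = 0 := by
    intro j
    have h1 : C j ((TensorProduct.map S (LinearMap.id : W →ₗ[ℂ] W)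
        + TensorProduct.map (LinearMap.id : V →ₗ[ℂ] V) T) z) = 0 :=
      by rw [hz, map_zero]
    rw [LinearMap.add_apply, map_add, ← LinearMap.comp_apply, ← LinearMap.comp_apply,
      hCS, hCT] at h1
    have h2 : (S + (μ j : ℂ) • (LinearMap.id : V →ₗ[ℂ] V)) (C j z) = 0 := by
      simpa using h1
    have h3 := h (μ j) ⟨w j, by simpa using w.toBasis.ne_zero j, hww j⟩
    have := h3 (a₂ := 0) (by simpa using h2)
    exact this
  -- conclude z = 0
  let v : Module.Basis (Fin (Module.finrank ℂ V)) ℂ V := Module.finBasis ℂ V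
  have key : ∀ (u : V ⊗[ℂ] W) (i) (j), (v.tensorProduct w.toBasis).repr u (i, j)
      = v.repr (C j u) i := by
    intro u i j
    induction u using TensorProduct.induction_on with
    | zero => simp
    | tmul x y =>
        rw [Module.Basis.tensorProduct_repr_tmul_apply, hC_tmul, map_smul]
        simp [mul_comm, w.coe_toBasis_repr_apply]
    | add u₁ u₂ ih₁ ih₂ => simp [ih₁, ih₂]
  apply (v.tensorProduct w.toBasis).ext_elem
  rintro ⟨i, j⟩
  rw [key z i j, hCz j]
  simp

lemma eps_comp_adjoint_sym (d : W →ₗ[ℂ] W') : (adjoint d ∘ₗ d).IsSymmetric := by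
  intro x y
  simp only [LinearMap.comp_apply]
  rw [LinearMap.adjoint_inner_left, LinearMap.adjoint_inner_right]

lemma eps_comp_adjoint_inj (c : V →ₗ[ℂ] V') (d : W →ₗ[ℂ] W')
    (h : Injective c ∨ Injective d) :
    Injective (TensorProduct.map (adjoint c ∘ₗ c) (LinearMap.id : W →ₗ[ℂ] W)
      + TensorProduct.map (LinearMap.id : V →ₗ[ℂ] V) (adjoint d ∘ₗ d)) := by
  apply eps_tensor_inj _ _ (eps_comp_adjoint_sym d)
  rintro μ ⟨x, hx0, hx⟩
  -- μ‖x‖² = ‖d x‖², so μ ≥ 0; μ > 0 if d injective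
  have hxx : (μ : ℂ) * (‖x‖ : ℂ) ^ 2 = (‖d x‖ : ℂ) ^ 2 := by
    have h1 : ⟪x, (adjoint d ∘ₗ d) x⟫ = (‖d x‖ : ℂ) ^ 2 := by
      rw [LinearMap.comp_apply, LinearMap.adjoint_inner_right, inner_self_eq_norm_sq_to_K]
      norm_num
    rw [hx] at h1
    rw [inner_smul_right, inner_self_eq_norm_sq_to_K] at h1
    exact h1
  have hxxR : μ * ‖x‖ ^ 2 = ‖d x‖ ^ 2 := by exact_mod_cast hxx
  have hnx : (0 : ℝ) < ‖x‖ ^ 2 := by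
    have := norm_pos_iff.mpr hx0
    positivity
  have hμ0 : 0 ≤ μ := by nlinarith [sq_nonneg ‖d x‖]
  have hμpos : Injective d → 0 < μ := by
    intro hd
    have hdx : d x ≠ 0 := fun hh => hx0 (by simpa using hd (a₂ := 0) (by simpa using hh))
    have hh2 := norm_pos_iff.mpr hdx
    have : (0:ℝ) < ‖d x‖ ^ 2 := by positivity
    nlinarith
  rw [← LinearMap.ker_eq_bot, Submodule.eq_bot_iff]
  intro v hv
  rw [LinearMap.mem_ker] at hv
  have h2R : ‖c v‖ ^ 2 + μ * ‖v‖ ^ 2 = 0 := by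
    have h0 := congrArg (fun u => ⟪v, u⟫) hv
    simp only [LinearMap.add_apply, LinearMap.comp_apply, LinearMap.smul_apply,
      LinearMap.id_apply, inner_add_right, inner_smul_right, LinearMap.adjoint_inner_right,
      inner_zero_right] at h0
    have h0r := congrArg Complex.re h0
    simp only [Complex.add_re, Complex.re_ofReal_mul, Complex.zero_re] at h0r
    have e1 : (inner (𝕜 := ℂ) (c v) (c v)).re = ‖c v‖ ^ 2 := by
      simpa using inner_self_eq_norm_sq (𝕜 := ℂ) (c v)
    have e2 : (inner (𝕜 := ℂ) v v).re = ‖v‖ ^ 2 := by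
      simpa using inner_self_eq_norm_sq (𝕜 := ℂ) v
    rw [e1, e2] at h0r
    exact h0r
  by_contra hv0
  have hnv : (0 : ℝ) < ‖v‖ ^ 2 := by
    have := norm_pos_iff.mpr hv0
    positivity
  rcases h with hc | hd
  · have hcv : c v ≠ 0 := fun hh => hv0 (by simpa using hc (a₂ := 0) (by simpa using hh))
    have hh3 := norm_pos_iff.mpr hcv
    have : (0:ℝ) < ‖c v‖ ^ 2 := by positivity
    nlinarith [mul_nonneg hμ0 (le_of_lt hnv)]
  · have := hμpos hd
    nlinarith [sq_nonneg ‖c v‖]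

end Helpers

/-- The external product of two symbols at a point.  Given `a : E₁⁺ → E₁⁻` and
`b : E₂⁺ → E₂⁻`, the block matrix `M = [[a⊗1, -1⊗b*],[1⊗b, a*⊗1]]`
(where `*` is the Hermitian adjoint) satisfies `M*M = (a*a⊗1 + 1⊗b*b) ⊕ (aa*⊗1 + 1⊗bb*)`
— a direct sum of nonnegative operators — and `M` is invertible iff `a` or `b` is. -/
theorem external_product_support
    (E1p E1m E2p E2m : Type*)
    [NormedAddCommGroup E1p] [InnerProductSpace ℂ E1p] [FiniteDimensional ℂ E1p]
    [NormedAddCommGroup E1m] [InnerProductSpace ℂ E1m] [FiniteDimensional ℂ E1m]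
    [NormedAddCommGroup E2p] [InnerProductSpace ℂ E2p] [FiniteDimensional ℂ E2p]
    [NormedAddCommGroup E2m] [InnerProductSpace ℂ E2m] [FiniteDimensional ℂ E2m]
    (a : E1p →ₗ[ℂ] E1m) (b : E2p →ₗ[ℂ] E2m)
    -- the block matrix `M = [[a⊗1, -1⊗b*],[1⊗b, a*⊗1]]` :
    (M : (E1p ⊗[ℂ] E2p) × (E1m ⊗[ℂ] E2m) →ₗ[ℂ] (E1m ⊗[ℂ] E2p) × (E1p ⊗[ℂ] E2m))
    (hM : M = LinearMap.prod
        ((TensorProduct.map a LinearMap.id) ∘ₗ LinearMap.fst ℂ _ _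
          - (TensorProduct.map LinearMap.id (LinearMap.adjoint b)) ∘ₗ LinearMap.snd ℂ _ _)
        ((TensorProduct.map LinearMap.id b) ∘ₗ LinearMap.fst ℂ _ _
          + (TensorProduct.map (LinearMap.adjoint a) LinearMap.id) ∘ₗ LinearMap.snd ℂ _ _))
    -- its Hermitian adjoint `M* = [[a*⊗1, 1⊗b*],[-1⊗b, a⊗1]]` :
    (Mstar : (E1m ⊗[ℂ] E2p) × (E1p ⊗[ℂ] E2m) →ₗ[ℂ] (E1p ⊗[ℂ] E2p) × (E1m ⊗[ℂ] E2m))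
    (hMstar : Mstar = LinearMap.prod
        ((TensorProduct.map (LinearMap.adjoint a) LinearMap.id) ∘ₗ LinearMap.fst ℂ _ _
          + (TensorProduct.map LinearMap.id (LinearMap.adjoint b)) ∘ₗ LinearMap.snd ℂ _ _)
        (-((TensorProduct.map (LinearMap.id : E1m →ₗ[ℂ] E1m) b)
            ∘ₗ LinearMap.fst ℂ (E1m ⊗[ℂ] E2p) (E1p ⊗[ℂ] E2m))
          + (TensorProduct.map a (LinearMap.id : E2m →ₗ[ℂ] E2m))
            ∘ₗ LinearMap.snd ℂ (E1m ⊗[ℂ] E2p) (E1p ⊗[ℂ] E2m))) :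
    Mstar ∘ₗ M = LinearMap.prodMap
        (TensorProduct.map (LinearMap.adjoint a ∘ₗ a) LinearMap.id
          + TensorProduct.map LinearMap.id (LinearMap.adjoint b ∘ₗ b))
        (TensorProduct.map (a ∘ₗ LinearMap.adjoint a) LinearMap.id
          + TensorProduct.map LinearMap.id (b ∘ₗ LinearMap.adjoint b))
    ∧ (Function.Bijective M ↔ (Function.Bijective a ∨ Function.Bijective b)) := by
  subst hM hMstar
  have hMM : LinearMap.prod
        ((TensorProduct.map (LinearMap.adjoint a) LinearMap.id) ∘ₗ LinearMap.fst ℂ _ _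
          + (TensorProduct.map LinearMap.id (LinearMap.adjoint b)) ∘ₗ LinearMap.snd ℂ _ _)
        (-((TensorProduct.map (LinearMap.id : E1m →ₗ[ℂ] E1m) b)
            ∘ₗ LinearMap.fst ℂ (E1m ⊗[ℂ] E2p) (E1p ⊗[ℂ] E2m))
          + (TensorProduct.map a (LinearMap.id : E2m →ₗ[ℂ] E2m))
            ∘ₗ LinearMap.snd ℂ (E1m ⊗[ℂ] E2p) (E1p ⊗[ℂ] E2m)) ∘ₗ
      LinearMap.prod
        ((TensorProduct.map a LinearMap.id) ∘ₗ LinearMap.fst ℂ _ _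
          - (TensorProduct.map LinearMap.id (LinearMap.adjoint b)) ∘ₗ LinearMap.snd ℂ _ _)
        ((TensorProduct.map LinearMap.id b) ∘ₗ LinearMap.fst ℂ _ _
          + (TensorProduct.map (LinearMap.adjoint a) LinearMap.id) ∘ₗ LinearMap.snd ℂ _ _)
      = LinearMap.prodMap
        (TensorProduct.map (LinearMap.adjoint a ∘ₗ a) LinearMap.id
          + TensorProduct.map LinearMap.id (LinearMap.adjoint b ∘ₗ b))
        (TensorProduct.map (a ∘ₗ LinearMap.adjoint a) LinearMap.id
          + TensorProduct.map LinearMap.id (b ∘ₗ LinearMap.adjoint b)) := by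
    ext x y <;> simp [TensorProduct.map_tmul, add_comm]
  have hMM' : LinearMap.prod
        ((TensorProduct.map a LinearMap.id) ∘ₗ LinearMap.fst ℂ _ _
          - (TensorProduct.map LinearMap.id (LinearMap.adjoint b)) ∘ₗ LinearMap.snd ℂ _ _)
        ((TensorProduct.map LinearMap.id b) ∘ₗ LinearMap.fst ℂ _ _
          + (TensorProduct.map (LinearMap.adjoint a) LinearMap.id) ∘ₗ LinearMap.snd ℂ _ _) ∘ₗ
      LinearMap.prod
        ((TensorProduct.map (LinearMap.adjoint a) LinearMap.id) ∘ₗ LinearMap.fst ℂ _ _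
          + (TensorProduct.map LinearMap.id (LinearMap.adjoint b)) ∘ₗ LinearMap.snd ℂ _ _)
        (-((TensorProduct.map (LinearMap.id : E1m →ₗ[ℂ] E1m) b)
            ∘ₗ LinearMap.fst ℂ (E1m ⊗[ℂ] E2p) (E1p ⊗[ℂ] E2m))
          + (TensorProduct.map a (LinearMap.id : E2m →ₗ[ℂ] E2m))
            ∘ₗ LinearMap.snd ℂ (E1m ⊗[ℂ] E2p) (E1p ⊗[ℂ] E2m))
      = LinearMap.prodMap
        (TensorProduct.map (a ∘ₗ LinearMap.adjoint a) LinearMap.id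
          + TensorProduct.map LinearMap.id (LinearMap.adjoint b ∘ₗ b))
        (TensorProduct.map (LinearMap.adjoint a ∘ₗ a) LinearMap.id
          + TensorProduct.map LinearMap.id (b ∘ₗ LinearMap.adjoint b)) := by
    ext x y <;> simp [TensorProduct.map_tmul, add_comm]
  refine ⟨hMM, ?_⟩
  set Mm := LinearMap.prod
        ((TensorProduct.map a LinearMap.id) ∘ₗ LinearMap.fst ℂ _ _
          - (TensorProduct.map LinearMap.id (LinearMap.adjoint b)) ∘ₗ LinearMap.snd ℂ _ _)
        ((TensorProduct.map LinearMap.id b) ∘ₗ LinearMap.fst ℂ _ _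
          + (TensorProduct.map (LinearMap.adjoint a) LinearMap.id) ∘ₗ LinearMap.snd ℂ _ _)
    with hMm
  set Ms := LinearMap.prod
        ((TensorProduct.map (LinearMap.adjoint a) LinearMap.id) ∘ₗ LinearMap.fst ℂ _ _
          + (TensorProduct.map LinearMap.id (LinearMap.adjoint b)) ∘ₗ LinearMap.snd ℂ _ _)
        (-((TensorProduct.map (LinearMap.id : E1m →ₗ[ℂ] E1m) b)
            ∘ₗ LinearMap.fst ℂ (E1m ⊗[ℂ] E2p) (E1p ⊗[ℂ] E2m))
          + (TensorProduct.map a (LinearMap.id : E2m →ₗ[ℂ] E2m))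
            ∘ₗ LinearMap.snd ℂ (E1m ⊗[ℂ] E2p) (E1p ⊗[ℂ] E2m)) with hMs
  constructor
  · -- forward direction
    intro hMbij
    by_contra hcon
    push_neg at hcon
    obtain ⟨hna, hnb⟩ := hcon
    -- clause 1 : Injective a ∨ Injective b
    have c1 : Injective a ∨ Injective b := by
      by_contra hc
      push_neg at hc
      obtain ⟨v, hv0, hv⟩ := eps_exists_ker a hc.1
      obtain ⟨w, hw0, hw⟩ := eps_exists_ker b hc.2
      have hz : Mm ((v ⊗ₜ[ℂ] w, (0 : E1m ⊗[ℂ] E2m))) = Mm 0 := by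
        simp [hMm, TensorProduct.map_tmul, hv, hw]
      have := hMbij.injective hz
      exact eps_tmul_ne_zero hv0 hw0 (by simpa using congrArg Prod.fst this)
    -- clause 2 : Injective a* ∨ Injective b*
    have c2 : Injective (adjoint a) ∨ Injective (adjoint b) := by
      by_contra hc
      push_neg at hc
      obtain ⟨v, hv0, hv⟩ := eps_exists_ker (adjoint a) hc.1
      obtain ⟨w, hw0, hw⟩ := eps_exists_ker (adjoint b) hc.2
      have hz : Mm (((0 : E1p ⊗[ℂ] E2p), v ⊗ₜ[ℂ] w)) = Mm 0 := by
        simp [hMm, TensorProduct.map_tmul, hv, hw]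
      have := hMbij.injective hz
      exact eps_tmul_ne_zero hv0 hw0 (by simpa using congrArg Prod.snd this)
    -- clause 3 : Injective a* ∨ Injective b
    have c3 : Injective (adjoint a) ∨ Injective b := by
      by_contra hc
      push_neg at hc
      obtain ⟨v, hv0, hv⟩ := eps_exists_ker (adjoint a) hc.1
      obtain ⟨w, hw0, hw⟩ := eps_exists_ker b hc.2
      obtain ⟨p, hp⟩ := hMbij.surjective ((v ⊗ₜ[ℂ] w, (0 : E1p ⊗[ℂ] E2m)))
      have e1 : epsPhi v w ((TensorProduct.map a (LinearMap.id : E2p →ₗ[ℂ] E2p)) p.1)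
          = 0 := by
        have := epsPhi_comp_left a (w := w) hv
        simpa using DFunLike.congr_fun this p.1
      have e2 : epsPhi v w ((TensorProduct.map (LinearMap.id : E1m →ₗ[ℂ] E1m)
          (adjoint b)) p.2) = 0 := by
        have hw' : adjoint (adjoint b) w = 0 := by rwa [LinearMap.adjoint_adjoint]
        have := epsPhi_comp_right (adjoint b) v hw'
        simpa using DFunLike.congr_fun this p.2
      have hfst : (Mm p).1 = v ⊗ₜ[ℂ] w := congrArg Prod.fst hp
      have : epsPhi v w (v ⊗ₜ[ℂ] w) = 0 := by
        rw [← hfst]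
        simp only [hMm, LinearMap.prod_apply, Function.prod, LinearMap.sub_apply,
          LinearMap.comp_apply, LinearMap.fst_apply, LinearMap.snd_apply]
        rw [map_sub, e1, e2, sub_zero]
      exact epsPhi_self_ne_zero hv0 hw0 this
    -- clause 4 : Injective a ∨ Injective b*
    have c4 : Injective a ∨ Injective (adjoint b) := by
      by_contra hc
      push_neg at hc
      obtain ⟨v, hv0, hv⟩ := eps_exists_ker a hc.1
      obtain ⟨w, hw0, hw⟩ := eps_exists_ker (adjoint b) hc.2
      obtain ⟨p, hp⟩ := hMbij.surjective (((0 : E1m ⊗[ℂ] E2p)), v ⊗ₜ[ℂ] w)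
      have e1 : epsPhi v w ((TensorProduct.map (LinearMap.id : E1p →ₗ[ℂ] E1p) b) p.1)
          = 0 := by
        have := epsPhi_comp_right b v hw
        simpa using DFunLike.congr_fun this p.1
      have e2 : epsPhi v w ((TensorProduct.map (adjoint a)
          (LinearMap.id : E2m →ₗ[ℂ] E2m)) p.2) = 0 := by
        have hv' : adjoint (adjoint a) v = 0 := by rwa [LinearMap.adjoint_adjoint]
        have := epsPhi_comp_left (adjoint a) (w := w) hv'
        simpa using DFunLike.congr_fun this p.2
      have hsnd : (Mm p).2 = v ⊗ₜ[ℂ] w := congrArg Prod.snd hp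
      have : epsPhi v w (v ⊗ₜ[ℂ] w) = 0 := by
        rw [← hsnd]
        simp only [hMm, LinearMap.prod_apply, Function.prod, LinearMap.add_apply,
          LinearMap.comp_apply, LinearMap.fst_apply, LinearMap.snd_apply]
        rw [map_add, e1, e2, add_zero]
      exact epsPhi_self_ne_zero hv0 hw0 this
    -- combine
    have s2 : Surjective a ∨ Surjective b :=
      c2.imp (eps_surj_of_adj_inj a) (eps_surj_of_adj_inj b)
    have s3 : Surjective a ∨ Injective b := c3.imp_left (eps_surj_of_adj_inj a)
    have s4 : Injective a ∨ Surjective b := c4.imp_right (eps_surj_of_adj_inj b)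
    rw [Function.Bijective] at hna hnb
    tauto
  · -- backward direction
    rintro hab
    have h1 : Injective a ∨ Injective b := hab.imp Bijective.injective Bijective.injective
    have h2 : Injective (adjoint a) ∨ Injective (adjoint b) :=
      hab.imp (fun h => eps_adj_inj_of_surj a h.surjective)
        (fun h => eps_adj_inj_of_surj b h.surjective)
    have h3 : Injective (adjoint a) ∨ Injective b :=
      hab.imp (fun h => eps_adj_inj_of_surj a h.surjective) Bijective.injective
    have h4 : Injective a ∨ Injective (adjoint b) :=
      hab.imp Bijective.injective (fun h => eps_adj_inj_of_surj b h.surjective)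
    -- injectivity of the four diagonal blocks
    have hD1 : Injective (TensorProduct.map (adjoint a ∘ₗ a)
        (LinearMap.id : E2p →ₗ[ℂ] E2p) + TensorProduct.map (LinearMap.id : E1p →ₗ[ℂ] E1p)
        (adjoint b ∘ₗ b)) := eps_comp_adjoint_inj a b h1
    have hD2 : Injective (TensorProduct.map (a ∘ₗ adjoint a)
        (LinearMap.id : E2m →ₗ[ℂ] E2m) + TensorProduct.map (LinearMap.id : E1m →ₗ[ℂ] E1m)
        (b ∘ₗ adjoint b)) := by
      have := eps_comp_adjoint_inj (adjoint a) (adjoint b) h2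
      rwa [LinearMap.adjoint_adjoint, LinearMap.adjoint_adjoint] at this
    have hD1' : Injective (TensorProduct.map (a ∘ₗ adjoint a)
        (LinearMap.id : E2p →ₗ[ℂ] E2p) + TensorProduct.map (LinearMap.id : E1m →ₗ[ℂ] E1m)
        (adjoint b ∘ₗ b)) := by
      have := eps_comp_adjoint_inj (adjoint a) b h3
      rwa [LinearMap.adjoint_adjoint] at this
    have hD2' : Injective (TensorProduct.map (adjoint a ∘ₗ a)
        (LinearMap.id : E2m →ₗ[ℂ] E2m) + TensorProduct.map (LinearMap.id : E1p →ₗ[ℂ] E1p)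
        (b ∘ₗ adjoint b)) := by
      have := eps_comp_adjoint_inj a (adjoint b) h4
      rwa [LinearMap.adjoint_adjoint] at this
    constructor
    · -- injectivity of M
      have hcomp : Injective (⇑Ms ∘ ⇑Mm) := by
        rw [← LinearMap.coe_comp, hMM, LinearMap.coe_prodMap]
        exact hD1.prodMap hD2
      exact Injective.of_comp hcomp
    · -- surjectivity of M
      have hS1 := LinearMap.injective_iff_surjective.mp hD1'
      have hS2 := LinearMap.injective_iff_surjective.mp hD2'
      have hcomp : Surjective (⇑Mm ∘ ⇑Ms) := by
        rw [← LinearMap.coe_comp, hMM', LinearMap.coe_prodMap]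
        exact hS1.prodMap hS2
      exact Surjective.of_comp hcomp
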